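/- For any number n of agents with additive utility functions over a finite set of indivisible goods, where each agent values each good at most 1, there exists an allocation O and a payment vector p ∈ ℝ^n_{≥0} such that the total subsidy satisfies Σ_{i=1}^n p_i ≤ n/4 and the allocation with payments is proportional: u_i(O_i) + p_i ≥ u_i(O)/n for every agent i. -/

import Mathlib

open Finset

/-- The bundle of agent `i` under the assignment `f` of items to agents;
an assignment `f : Fin m → Fin n` encodes a complete allocation. -/
def bundle {n m : ℕ} (f : Fin m → Fin n) (i : Fin n) : Finset (Fin m) :=
  Finset.univ.filter fun o => f o = i


noncomputable def pik (m : ℕ) [NeZero m] (S : ℕ → Finset (Fin m)) : ℕ → Fin m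
  | t =>
    if h : (S t \ (Finset.range t).attach.image (fun k => pik m S k.1)).Nonempty
    then h.choose else default
termination_by t => t
decreasing_by all_goals exact Finset.mem_range.mp k.2

lemma pik_spec (m : ℕ) [NeZero m] (S : ℕ → Finset (Fin m)) (t : ℕ)
    (hcard : t + 1 ≤ (S t).card) :
    pik m S t ∈ S t ∧ ∀ k < t, pik m S t ≠ pik m S k := by
  have hne : (S t \ (Finset.range t).attach.image (fun k => pik m S k.1)).Nonempty := by
    rw [Finset.sdiff_nonempty]
    intro hsub
    have h1 : (S t).card ≤ ((Finset.range t).attach.image (fun k => pik m S k.1)).card :=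
      Finset.card_le_card hsub
    have h2 : ((Finset.range t).attach.image (fun k => pik m S k.1)).card ≤ t := by
      calc _ ≤ (Finset.range t).attach.card := Finset.card_image_le
        _ = t := by simp
    omega
  have hmem := hne.choose_spec
  rw [Finset.mem_sdiff] at hmem
  constructor
  · rw [pik, dif_pos hne]; exact hmem.1
  · intro k hk hEq
    rw [pik, dif_pos hne] at hEq
    exact hmem.2 (hEq ▸ Finset.mem_image.mpr ⟨⟨k, Finset.mem_range.mpr hk⟩, Finset.mem_attach _ _, rfl⟩)

lemma window {n : ℕ} (hn : 0 < n) (ℓ : Fin n → ℝ) (s : ℝ)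
    (hsum : ∑ a, ℓ a = n * s) (hdiff : ∀ a b : Fin n, ℓ a - ℓ b ≤ 1) :
    ∑ a, max (s - ℓ a) 0 ≤ (n : ℝ) / 4 := by
  haveI : NeZero n := ⟨hn.ne'⟩
  obtain ⟨amin, -, hamin⟩ := Finset.exists_min_image Finset.univ ℓ ⟨0, Finset.mem_univ 0⟩
  obtain ⟨amax, -, hamax⟩ := Finset.exists_max_image Finset.univ ℓ ⟨0, Finset.mem_univ 0⟩
  have hminle : ∀ a, ℓ amin ≤ ℓ a := fun a => hamin a (Finset.mem_univ a)
  have hmaxle : ∀ a, ℓ a ≤ ℓ amax := fun a => hamax a (Finset.mem_univ a)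
  have hnR : (0:ℝ) < n := by exact_mod_cast hn
  set α := s - ℓ amin with hα
  set β := ℓ amax - s with hβ
  have hαβ : α + β ≤ 1 := by have := hdiff amax amin; simp only [hα, hβ]; linarith
  have hα0 : 0 ≤ α := by
    have h1 : (n : ℝ) * ℓ amin ≤ ∑ a, ℓ a := by
      calc (n : ℝ) * ℓ amin = ∑ _a : Fin n, ℓ amin := by simp [mul_comm]
        _ ≤ ∑ a, ℓ a := Finset.sum_le_sum (fun a _ => hminle a)
    rw [hsum] at h1
    nlinarith
  have hβ0 : 0 ≤ β := by
    have h1 : ∑ a, ℓ a ≤ (n : ℝ) * ℓ amax := by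
      calc ∑ a, ℓ a ≤ ∑ _a : Fin n, ℓ amax := Finset.sum_le_sum (fun a _ => hmaxle a)
        _ = (n : ℝ) * ℓ amax := by simp [mul_comm]
    rw [hsum] at h1
    nlinarith
  set A := Finset.univ.filter (fun a => ℓ a < s) with hA
  set B := Finset.univ.filter (fun a => ¬ ℓ a < s) with hB
  set t := A.card with ht
  have htn : t + B.card = n := by
    rw [ht, hA, hB]
    rw [Finset.card_filter_add_card_filter_not]
    simp
  set P := ∑ a, max (s - ℓ a) 0 with hP
  have hP0 : 0 ≤ P := Finset.sum_nonneg (fun a _ => le_max_right _ _)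
  have hsplit : P = ∑ a ∈ A, (s - ℓ a) := by
    rw [hP, ← Finset.sum_filter_add_sum_filter_not Finset.univ (fun a => ℓ a < s)]
    have h1 : ∀ a ∈ A, max (s - ℓ a) 0 = s - ℓ a := by
      intro a ha; rw [hA, Finset.mem_filter] at ha
      exact max_eq_left (by linarith [ha.2])
    have h2 : ∀ a ∈ B, max (s - ℓ a) 0 = 0 := by
      intro a ha; rw [hB, Finset.mem_filter] at ha
      exact max_eq_right (by push_neg at ha; linarith [ha.2])
    rw [← hA, ← hB, Finset.sum_congr rfl h1, Finset.sum_congr rfl h2]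
    simp
  have h1 : P ≤ t * α := by
    rw [hsplit]
    calc ∑ a ∈ A, (s - ℓ a) ≤ ∑ _a ∈ A, α := Finset.sum_le_sum (fun a _ => by
          have := hminle a; simp only [hα]; linarith)
      _ = t * α := by rw [Finset.sum_const, ht, nsmul_eq_mul]
  have hzero : ∑ a, (s - ℓ a) = 0 := by
    rw [Finset.sum_sub_distrib, hsum]; simp [mul_comm]
  have h2 : P ≤ ((n:ℝ) - t) * β := by
    have hcompl : P = ∑ a ∈ B, (ℓ a - s) := by
      have hh := Finset.sum_filter_add_sum_filter_not Finset.univ (fun a => ℓ a < s)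
        (fun a => (s - ℓ a))
      rw [← hA, ← hB, hzero] at hh
      have h3 : ∑ a ∈ B, (ℓ a - s) = - ∑ a ∈ B, (s - ℓ a) := by
        rw [← Finset.sum_neg_distrib]; congr 1; ext a; ring
      rw [hsplit, h3]; linarith
    rw [hcompl]
    calc ∑ a ∈ B, (ℓ a - s) ≤ ∑ _a ∈ B, β := Finset.sum_le_sum (fun a _ => by
          have := hmaxle a; simp only [hβ]; linarith)
      _ = (B.card : ℝ) * β := by rw [Finset.sum_const, nsmul_eq_mul]
      _ = ((n:ℝ) - t) * β := by
          have : (B.card : ℝ) = (n:ℝ) - t := by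
            have := htn; push_cast [← this]; ring
          rw [this]
  have htn' : (t:ℝ) ≤ n := by
    have : t ≤ n := by omega
    exact_mod_cast this
  have ht0 : (0:ℝ) ≤ t := by positivity
  -- P^2 ≤ t*α*((n-t)*β) ≤ t*(n-t)*α*(1-α) ≤ (n^2/4)*(1/4)
  have hsq : P * P ≤ (t * α) * (((n:ℝ) - t) * β) := mul_le_mul h1 h2 hP0 (by positivity)
  have hβ1 : β ≤ 1 - α := by linarith
  have hα1 : α ≤ 1 := by linarith
  have c1 : P * P ≤ ((t:ℝ) * ((n:ℝ) - t)) * (α * (1 - α)) := by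
    have step : ((n:ℝ) - t) * β ≤ ((n:ℝ) - t) * (1 - α) :=
      mul_le_mul_of_nonneg_left hβ1 (by linarith)
    calc P * P ≤ (↑t * α) * ((↑n - ↑t) * β) := hsq
      _ ≤ (↑t * α) * ((↑n - ↑t) * (1 - α)) :=
          mul_le_mul_of_nonneg_left step (mul_nonneg ht0 hα0)
      _ = ((t:ℝ) * ((n:ℝ) - t)) * (α * (1 - α)) := by ring
  have c2 : ((t:ℝ) * ((n:ℝ) - t)) ≤ (n:ℝ)^2 / 4 := by nlinarith [sq_nonneg ((n:ℝ) - 2*t)]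
  have c3 : α * (1 - α) ≤ 1/4 := by nlinarith [sq_nonneg (1 - 2*α)]
  have c4 : P * P ≤ ((n:ℝ)/4) * ((n:ℝ)/4) := by
    calc P * P ≤ ((t:ℝ) * ((n:ℝ) - t)) * (α * (1 - α)) := c1
      _ ≤ ((n:ℝ)^2/4) * (1/4) := mul_le_mul c2 c3 (mul_nonneg hα0 (by linarith))
          (by positivity)
      _ = ((n:ℝ)/4) * ((n:ℝ)/4) := by ring
  by_contra hcon
  push_neg at hcon
  have : ((n:ℝ)/4) * ((n:ℝ)/4) < P * P :=
    mul_lt_mul'' hcon hcon (by positivity) (by positivity)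
  linarith

lemma exists_good_alloc {n m : ℕ} [NeZero m] (v : Fin n → Fin m → ℝ)
    (ag : ℕ → Fin n) (w : Fin n → ℕ → ℝ)
    (T : ℕ → Finset (Fin m))
    (hT : ∀ t, t < m → t + 1 ≤ (T t).card)
    (hTv : ∀ t, t < m → ∀ o ∈ T t, w (ag t) t ≤ v (ag t) o) :
    ∃ f : Fin m → Fin n, ∀ i : Fin n,
      (∑ t : Fin m, if ag t.val = i then w i t.val else 0) ≤ ∑ o ∈ bundle f i, v i o := by
  have hspec : ∀ t : Fin m, pik m T t.val ∈ T t.val ∧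
      ∀ k < t.val, pik m T t.val ≠ pik m T k :=
    fun t => pik_spec m T t.val (hT t.val t.isLt)
  have hinj : Function.Injective (fun t : Fin m => pik m T t.val) := by
    intro t t' hEq
    by_contra hne
    rcases Nat.lt_or_ge t.val t'.val with h | h
    · exact (hspec t').2 t.val h hEq.symm
    · have : t'.val < t.val := by
        rcases Nat.eq_or_lt_of_le h with h1 | h1
        · exact absurd (Fin.ext h1.symm) hne
        · exact h1
      exact (hspec t).2 t'.val this hEq
  have hbij := Finite.injective_iff_bijective.mp hinj
  set E := Equiv.ofBijective _ hbij with hE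
  refine ⟨fun o => ag ((E.symm o) : Fin m).val, fun i => ?_⟩
  have hsum : ∑ o ∈ bundle (fun o => ag ((E.symm o) : Fin m).val) i, v i o
      = ∑ t : Fin m, if ag t.val = i then v i (pik m T t.val) else 0 := by
    rw [bundle, Finset.sum_filter, ← Equiv.sum_comp E
      (fun o => if ag ((E.symm o) : Fin m).val = i then v i o else 0)]
    refine Finset.sum_congr rfl (fun t _ => ?_)
    rw [Equiv.symm_apply_apply]
    rfl
  rw [hsum]
  refine Finset.sum_le_sum (fun t _ => ?_)
  by_cases h : ag t.val = i
  · simp only [h, if_true]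
    have := hTv t.val t.isLt (pik m T t.val) (hspec t).1
    rwa [h] at this
  · simp [h]

/-- With additive utilities over indivisible goods, each good valued in
`[0, 1]` by every agent, there exists an allocation and non-negative payments with total
subsidy at most `n/4` such that the allocation with payments is proportional:
`u i (O i) + p i ≥ u i (O) / n` for every agent `i`. -/
theorem prop_total_subsidy_n_over_four (n m : ℕ) (hn : 0 < n)
    (v : Fin n → Fin m → ℝ) (hv : ∀ i o, 0 ≤ v i o ∧ v i o ≤ 1) :
    ∃ (f : Fin m → Fin n) (p : Fin n → ℝ),
      (∀ i, 0 ≤ p i) ∧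
      (∑ i : Fin n, p i) ≤ (n : ℝ) / 4 ∧
      (∀ i : Fin n,
        (∑ o ∈ bundle f i, v i o) + p i ≥ (∑ o : Fin m, v i o) / n) := by
  haveI : NeZero n := ⟨hn.ne'⟩
  rcases Nat.eq_zero_or_pos m with hm | hm
  · subst hm
    refine ⟨fun o => o.elim0, fun _ => 0, fun i => le_refl 0, by simp; positivity, fun i => ?_⟩
    have h1 : (bundle (fun o : Fin 0 => o.elim0) i) = (∅ : Finset (Fin 0)) :=
      Finset.eq_empty_of_isEmpty _
    simp [h1]
  haveI : NeZero m := ⟨hm.ne'⟩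
  have hnR : (0:ℝ) < n := by exact_mod_cast hn
  -- sorted values
  set e : Fin n → Equiv.Perm (Fin m) := fun i => Tuple.sort (fun o => -(v i o)) with he
  set w : Fin n → ℕ → ℝ := fun i j => if h : j < m then v i (e i ⟨j, h⟩) else 0 with hw
  have hw0 : ∀ i j, 0 ≤ w i j := by
    intro i j; rw [hw]; dsimp only
    split
    · exact (hv i _).1
    · exact le_refl 0
  have hw1 : ∀ i j, w i j ≤ 1 := by
    intro i j; rw [hw]; dsimp only
    split
    · exact (hv i _).2
    · norm_num
  have hwanti : ∀ (i : Fin n) (j j' : ℕ), j ≤ j' → w i j' ≤ w i j := by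
    intro i j j' hjj
    rw [hw]; dsimp only
    rcases Nat.lt_or_ge j' m with h' | h'
    · have hjm : j < m := lt_of_le_of_lt hjj h'
      rw [dif_pos h', dif_pos hjm]
      have := Tuple.monotone_sort (fun o => -(v i o))
        (a := ⟨j, hjm⟩) (b := ⟨j', h'⟩) (by exact hjj)
      simp only [Function.comp_apply] at this
      have he' : e i = Tuple.sort (fun o => -(v i o)) := by rw [he]
      rw [← he'] at this
      linarith
    · rw [dif_neg (by omega)]
      split
      · exact (hv i _).1
      · exact le_refl 0
  have hwsum : ∀ i, ∑ j ∈ Finset.range m, w i j = ∑ o, v i o := by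
    intro i
    rw [← Fin.sum_univ_eq_sum_range (fun j => w i j) m]
    rw [← Equiv.sum_comp (e i) (v i)]
    refine Finset.sum_congr rfl (fun t _ => ?_)
    rw [hw]; dsimp only
    rw [dif_pos t.isLt]
  -- residue class sums
  set ℓ : Fin n → ℕ → ℝ := fun i a => ∑ k ∈ Finset.range m, w i (k*n + a) with hℓ
  have hℓsum : ∀ i, ∑ a : Fin n, ℓ i a.val = ∑ o, v i o := by
    intro i
    rw [Fin.sum_univ_eq_sum_range (fun a => ℓ i a) n]
    have h1 : ∑ a ∈ Finset.range n, ℓ i a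
        = ∑ p ∈ (Finset.range n) ×ˢ (Finset.range m), w i (p.2 * n + p.1) := by
      rw [Finset.sum_product]
    rw [h1]
    have h2 : ∑ p ∈ (Finset.range n) ×ˢ (Finset.range m), w i (p.2 * n + p.1)
        = ∑ j ∈ Finset.range (m * n), w i j := by
      refine Finset.sum_nbij' (fun p => p.2 * n + p.1) (fun x => (x % n, x / n)) ?_ ?_ ?_ ?_ ?_
      · rintro ⟨a, k⟩ hp
        simp only [Finset.mem_product, Finset.mem_range] at hp
        simp only [Finset.mem_range]
        have h4 : k * n + n = (k+1) * n := by ring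
        have h5 : (k+1) * n ≤ m * n := Nat.mul_le_mul_right n (by omega)
        omega
      · intro x hx
        simp only [Finset.mem_range] at hx
        simp only [Finset.mem_product, Finset.mem_range]
        exact ⟨Nat.mod_lt _ hn, (Nat.div_lt_iff_lt_mul hn).mpr hx⟩
      · rintro ⟨a, k⟩ hp
        simp only [Finset.mem_product, Finset.mem_range] at hp
        have h6 : (k * n + a) % n = a := by
          rw [Nat.add_comm, Nat.add_mul_mod_self_right, Nat.mod_eq_of_lt hp.1]
        have h7 : (k * n + a) / n = k := by
          rw [Nat.add_comm, Nat.add_mul_div_right _ _ hn, Nat.div_eq_of_lt hp.1]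
          omega
        simp [h6, h7]
      · intro x _
        simp only
        rw [Nat.mul_comm]
        exact Nat.div_add_mod x n
      · intro p _
        rfl
    rw [h2]
    rw [← Finset.sum_subset (Finset.range_subset_range.mpr (Nat.le_mul_of_pos_right m hn))
      (fun x _ hx => by
        rw [hw]; dsimp only
        rw [dif_neg (by simpa using hx)])]
    exact hwsum i
  have hclass : ∀ (i : Fin n) (a : ℕ), a < n →
      (∑ t : Fin m, if t.val % n = a then w i t.val else 0) = ℓ i a := by
    intro i a ha
    rw [← Finset.sum_filter]
    have hres : ℓ i a = ∑ k ∈ (Finset.range m).filter (fun k => k * n + a < m), w i (k*n + a) := by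
      rw [hℓ]; dsimp only
      symm
      apply Finset.sum_subset (Finset.filter_subset _ _)
      intro k hk hnk
      rw [Finset.mem_filter, not_and] at hnk
      rw [hw]; dsimp only
      rw [dif_neg (hnk hk)]
    rw [hres]
    refine Finset.sum_nbij' (fun t => t.val / n) (fun k => (⟨(k*n + a) % m, Nat.mod_lt _ hm⟩ : Fin m)) ?_ ?_ ?_ ?_ ?_
    · intro t ht
      rw [Finset.mem_filter] at ht
      have heq : t.val / n * n + a = t.val := by
        rw [← ht.2]; exact Nat.div_add_mod' t.val n
      rw [Finset.mem_filter, Finset.mem_range]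
      refine ⟨lt_of_le_of_lt (Nat.div_le_self _ _) t.isLt, ?_⟩
      rw [heq]; exact t.isLt
    · intro k hk
      rw [Finset.mem_filter] at hk
      rw [Finset.mem_filter]
      have hlt : k * n + a < m := hk.2
      have hmod : (k * n + a) % m = k * n + a := Nat.mod_eq_of_lt hlt
      constructor
      · exact Finset.mem_univ _
      · show ((k*n + a) % m) % n = a
        rw [hmod, Nat.add_comm, Nat.add_mul_mod_self_right, Nat.mod_eq_of_lt ha]
    · intro t ht
      rw [Finset.mem_filter] at ht
      have heq : t.val / n * n + a = t.val := by
        rw [← ht.2]; exact Nat.div_add_mod' t.val n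
      apply Fin.ext
      show (t.val / n * n + a) % m = t.val
      rw [heq, Nat.mod_eq_of_lt t.isLt]
    · intro k hk
      rw [Finset.mem_filter] at hk
      have hmod : (k * n + a) % m = k * n + a := Nat.mod_eq_of_lt hk.2
      show ((k*n + a) % m) / n = k
      rw [hmod, Nat.add_comm, Nat.add_mul_div_right _ _ hn, Nat.div_eq_of_lt ha]
      omega
    · intro t ht
      rw [Finset.mem_filter] at ht
      have heq : t.val / n * n + a = t.val := by
        rw [← ht.2]; exact Nat.div_add_mod' t.val n
      rw [heq]
  have hℓdiff : ∀ (i : Fin n) (a b : Fin n), ℓ i a.val - ℓ i b.val ≤ 1 := by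
    intro i a b
    have h1 : ℓ i a.val ≤ ∑ k ∈ Finset.range m, w i (k*n) := by
      rw [hℓ]; dsimp only
      exact Finset.sum_le_sum (fun k _ => hwanti i (k*n) (k*n + a.val) (Nat.le_add_right _ _))
    have h2 : ∑ k ∈ Finset.range m, w i ((k+1)*n) ≤ ℓ i b.val := by
      rw [hℓ]; dsimp only
      refine Finset.sum_le_sum (fun k _ => hwanti i (k*n + b.val) ((k+1)*n) ?_)
      have := b.isLt
      have h4 : (k+1)*n = k*n + n := by ring
      omega
    have h3 : ∑ k ∈ Finset.range m, (w i (k*n) - w i ((k+1)*n)) = w i (0*n) - w i (m*n) :=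
      Finset.sum_range_sub' (fun k => w i (k*n)) m
    rw [Finset.sum_sub_distrib] at h3
    have h5 : w i (0*n) ≤ 1 := hw1 i _
    have h6 : 0 ≤ w i (m*n) := hw0 i _
    linarith
  -- allocations per shift
  have halloc : ∀ c : Fin n, ∃ f : Fin m → Fin n, ∀ i : Fin n,
      ℓ i ((i - c : Fin n)).val ≤ ∑ o ∈ bundle f i, v i o := by
    intro c
    open Fin.NatCast in
    set ag : ℕ → Fin n := fun t => ((t : Fin n) + c) with hag
    set T : ℕ → Finset (Fin m) := fun t =>
      (Finset.range (min (t+1) m)).attach.image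
        (fun j => e (ag t) ⟨j.1, lt_of_lt_of_le (Finset.mem_range.mp j.2) (min_le_right _ _)⟩)
      with hT
    have hTcard : ∀ t, t < m → t + 1 ≤ (T t).card := by
      intro t ht
      rw [hT]; dsimp only
      rw [Finset.card_image_of_injective _ (fun j j' hjj => ?_)]
      · rw [Finset.card_attach, Finset.card_range]
        omega
      · have := (e (ag t)).injective hjj
        rw [Fin.mk.injEq] at this
        exact Subtype.ext this
    have hTv : ∀ t, t < m → ∀ o ∈ T t, w (ag t) t ≤ v (ag t) o := by
      intro t ht o ho
      rw [hT] at ho; dsimp only at ho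
      obtain ⟨j, -, rfl⟩ := Finset.mem_image.mp ho
      have hj : j.1 < min (t+1) m := Finset.mem_range.mp j.2
      have hj1 : j.1 < m := lt_of_lt_of_le hj (min_le_right _ _)
      have hvw : v (ag t) (e (ag t) ⟨j.1, lt_of_lt_of_le (Finset.mem_range.mp j.2) (min_le_right _ _)⟩)
          = w (ag t) j.1 := by
        rw [hw]; dsimp only
        rw [dif_pos hj1]
      rw [hvw]
      exact hwanti (ag t) j.1 t (by omega)
    obtain ⟨f, hf⟩ := exists_good_alloc v ag w T hTcard hTv
    refine ⟨f, fun i => ?_⟩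
    refine le_trans (le_of_eq ?_) (hf i)
    rw [← hclass i ((i - c : Fin n)).val (i - c).isLt]
    refine Finset.sum_congr rfl (fun t _ => ?_)
    refine if_congr ?_ rfl rfl
    rw [hag]; dsimp only
    constructor
    · intro h
      open Fin.NatCast in
      have hcast : ((t.val : Fin n)) = i - c := Fin.ext (by rw [Fin.val_natCast]; exact h)
      rw [hcast]
      abel
    · intro h
      rw [← h, add_sub_cancel_right, Fin.val_natCast]
  set sh : Fin n → ℝ := fun i => (∑ o, v i o)/n with hsh
  choose F hF using halloc
  have hper : ∀ i, ∑ c : Fin n, max (sh i - ℓ i ((i - c : Fin n)).val) 0 ≤ (n:ℝ)/4 := by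
    intro i
    have hre : ∑ c : Fin n, max (sh i - ℓ i ((i - c : Fin n)).val) 0
        = ∑ a : Fin n, max (sh i - ℓ i a.val) 0 := by
      rw [← Equiv.sum_comp (Equiv.subLeft i) (fun a => max (sh i - ℓ i a.val) 0)]
      exact Finset.sum_congr rfl (fun c _ => by rw [Equiv.subLeft_apply])
    rw [hre]
    refine window hn (fun a => ℓ i a.val) (sh i) ?_ (fun a b => hℓdiff i a b)
    rw [hℓsum i, hsh]; dsimp only
    field_simp
  have htot : ∑ c : Fin n, (∑ i, max (sh i - ∑ o ∈ bundle (F c) i, v i o) 0)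
      ≤ ∑ _c : Fin n, (n:ℝ)/4 := by
    have hstep : ∀ c : Fin n, ∑ i, max (sh i - ∑ o ∈ bundle (F c) i, v i o) 0
        ≤ ∑ i, max (sh i - ℓ i ((i - c : Fin n)).val) 0 := by
      intro c
      refine Finset.sum_le_sum (fun i _ => max_le_max ?_ (le_refl 0))
      have := hF c i
      linarith
    calc ∑ c : Fin n, (∑ i, max (sh i - ∑ o ∈ bundle (F c) i, v i o) 0)
        ≤ ∑ c : Fin n, ∑ i, max (sh i - ℓ i ((i - c : Fin n)).val) 0 :=
          Finset.sum_le_sum (fun c _ => hstep c)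
      _ = ∑ i, ∑ c : Fin n, max (sh i - ℓ i ((i - c : Fin n)).val) 0 := Finset.sum_comm
      _ ≤ ∑ _i : Fin n, (n:ℝ)/4 := Finset.sum_le_sum (fun i _ => hper i)
      _ = ∑ _c : Fin n, (n:ℝ)/4 := rfl
  obtain ⟨c, -, hc⟩ := Finset.exists_le_of_sum_le ⟨0, Finset.mem_univ 0⟩ htot
  refine ⟨F c, fun i => max (sh i - ∑ o ∈ bundle (F c) i, v i o) 0,
    fun i => le_max_right _ _, hc, fun i => ?_⟩
  have h1 := le_max_left (sh i - ∑ o ∈ bundle (F c) i, v i o) 0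
  have h2 : sh i = (∑ o : Fin m, v i o) / n := by rw [hsh]
  rw [ge_iff_le, ← h2]
  linarith
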